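/- The interval decomposition of a persistence module is unique: if a persistence module of length n over a field k, with all vector spaces finite-dimensional, is isomorphic both to the direct sum of interval modules I[a,b] indexed by a finite multiset S of pairs (a,b) and to the direct sum indexed by a finite multiset T of pairs (a,b), then S = T as multisets of intervals. -/

import Mathlib

/-!
STATEMENT 1: The interval decomposition of a persistence module is unique: if a
persistence module of length `n` over a field `k`, with all vector spaces
finite-dimensional, is isomorphic both to the direct sum of interval modules `I[a,b]`
indexed by a finite multiset `S` of pairs `(a,b)` and to the direct sum indexed by a
finite multiset `T` of pairs `(a,b)`, then `S = T` as multisets of intervals.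

Finite multisets of intervals are encoded by finite index types `ι` together with a
function `ι → ℕ × ℕ`; the corresponding multiset is the image of `Finset.univ.val`.
-/

open DirectSum

/-- The `i`-th space of the interval module `I[a,b]`, realized as a submodule of `k`:
it is all of `k` (i.e. `⊤`) for `a ≤ i ≤ b` and the zero submodule otherwise. -/
def intervalSubmodule (k : Type*) [Field k] (a b i : ℕ) : Submodule k k :=
  if a ≤ i ∧ i ≤ b then ⊤ else ⊥

open Classical in
/-- The structure map of the interval module `I[a,b]` from index `i` to index `j`:
the (identity-like) inclusion whenever it exists, and zero otherwise.  For `j = i + 1`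
this is the identity of `k` when `a ≤ i < b` (both spaces being `⊤`) and zero otherwise. -/
noncomputable def intervalStep (k : Type*) [Field k] (a b i j : ℕ) :
    intervalSubmodule k a b i →ₗ[k] intervalSubmodule k a b j :=
  if h : intervalSubmodule k a b i ≤ intervalSubmodule k a b j then Submodule.inclusion h
  else 0

/-- The direct sum of a family of linear maps, as a map between direct sums. -/
noncomputable def dsumMap {k : Type*} [Field k] {ι : Type*} [DecidableEq ι]
    {M N : ι → Type*} [∀ x, AddCommGroup (M x)] [∀ x, Module k (M x)]
    [∀ x, AddCommGroup (N x)] [∀ x, Module k (N x)]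
    (f : ∀ x, M x →ₗ[k] N x) : (⨁ x, M x) →ₗ[k] ⨁ x, N x :=
  DirectSum.toModule k ι _ fun x => (DirectSum.lof k ι N x).comp (f x)

/-- `IsIntervalDecomposition k n V φ ab` says that the persistence module `(V, φ)` of
length `n` is isomorphic, as a persistence module, to the direct sum of the interval
modules `I[(ab x).1, (ab x).2]`, `x : ι`, all of whose intervals satisfy `a ≤ b ≤ n`. -/
def IsIntervalDecomposition (k : Type) [Field k] (n : ℕ)
    (V : Fin (n + 1) → Type) [∀ i, AddCommGroup (V i)] [∀ i, Module k (V i)]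
    (φ : ∀ i : Fin n, V i.castSucc →ₗ[k] V i.succ)
    {ι : Type} [Fintype ι] [DecidableEq ι] (ab : ι → ℕ × ℕ) : Prop :=
  (∀ x, (ab x).1 ≤ (ab x).2) ∧ (∀ x, (ab x).2 ≤ n) ∧
  ∃ e : ∀ i : Fin (n + 1),
      V i ≃ₗ[k] ⨁ x : ι, intervalSubmodule k (ab x).1 (ab x).2 (i : ℕ),
    ∀ (i : Fin n) (v : V i.castSucc),
      e i.succ (φ i v) =
        dsumMap (fun x => intervalStep k (ab x).1 (ab x).2 (i : ℕ) ((i : ℕ) + 1))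
          (e i.castSucc v)


section Aux
variable {k : Type*} [Field k]

lemma intervalSubmodule_eq_top {a b i : ℕ} (h1 : a ≤ i) (h2 : i ≤ b) :
    intervalSubmodule k a b i = ⊤ := if_pos ⟨h1, h2⟩

lemma intervalSubmodule_eq_bot {a b i : ℕ} (h : ¬(a ≤ i ∧ i ≤ b)) :
    intervalSubmodule k a b i = ⊥ := if_neg h

lemma intervalSubmodule_zero {a b i : ℕ} (h : ¬(a ≤ i ∧ i ≤ b))
    (v : intervalSubmodule k a b i) : v = 0 := by
  have hv : (v : k) ∈ (if a ≤ i ∧ i ≤ b then (⊤ : Submodule k k) else ⊥) := v.2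
  rw [if_neg h] at hv
  exact Subtype.ext (by simpa using hv)

lemma not_le_of_top_bot {a b i j : ℕ} (hi : a ≤ i ∧ i ≤ b) (hj : ¬(a ≤ j ∧ j ≤ b)) :
    ¬ intervalSubmodule k a b i ≤ intervalSubmodule k a b j := by
  rw [intervalSubmodule_eq_top hi.1 hi.2, intervalSubmodule_eq_bot hj]
  simp [top_le_iff]

lemma intervalStep_eq_zero {a b i j : ℕ} (hij : i ≤ j) (h : ¬(a ≤ i ∧ j ≤ b)) :
    intervalStep k a b i j = 0 := by
  by_cases hi : a ≤ i ∧ i ≤ b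
  · have hj : ¬(a ≤ j ∧ j ≤ b) := by omega
    rw [intervalStep, dif_neg (not_le_of_top_bot hi hj)]
  · ext v
    rw [intervalSubmodule_zero hi v]
    simp

lemma intervalStep_comp (a b i m j : ℕ) (him : i ≤ m) (hmj : m ≤ j) :
    (intervalStep k a b m j).comp (intervalStep k a b i m) = intervalStep k a b i j := by
  by_cases hi : a ≤ i ∧ i ≤ b
  · by_cases hj : j ≤ b
    · have hm : a ≤ m ∧ m ≤ b := ⟨hi.1.trans him, hmj.trans hj⟩
      have hj' : a ≤ j ∧ j ≤ b := ⟨hi.1.trans (him.trans hmj), hj⟩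
      have h1 : intervalSubmodule k a b i ≤ intervalSubmodule k a b m := by
        rw [intervalSubmodule_eq_top hm.1 hm.2]; exact le_top
      have h2 : intervalSubmodule k a b m ≤ intervalSubmodule k a b j := by
        rw [intervalSubmodule_eq_top hj'.1 hj'.2]; exact le_top
      have h3 : intervalSubmodule k a b i ≤ intervalSubmodule k a b j := by
        rw [intervalSubmodule_eq_top hj'.1 hj'.2]; exact le_top
      refine LinearMap.ext fun v => Subtype.ext ?_
      simp [intervalStep, dif_pos h1, dif_pos h2, dif_pos h3]
    · have hzr : intervalStep k a b i j = 0 := intervalStep_eq_zero (him.trans hmj) (by omega)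
      rw [hzr]
      by_cases hm : m ≤ b
      · have : intervalStep k a b m j = 0 := intervalStep_eq_zero hmj (by omega)
        rw [this, LinearMap.zero_comp]
      · have : intervalStep k a b i m = 0 := intervalStep_eq_zero him (by omega)
        rw [this, LinearMap.comp_zero]
  · refine LinearMap.ext fun v => ?_
    rw [intervalSubmodule_zero hi v]
    simp

lemma intervalStep_injective {a b i j : ℕ} (hi : a ≤ i) (hij : i ≤ j) (hj : j ≤ b) :
    Function.Injective (intervalStep k a b i j) := by
  have h : intervalSubmodule k a b i ≤ intervalSubmodule k a b j := by
    rw [intervalSubmodule_eq_top (hi.trans hij) hj]; exact le_top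
  rw [intervalStep, dif_pos h]
  exact Submodule.inclusion_injective h

lemma intervalStep_self (a b i : ℕ) : intervalStep k a b i i = LinearMap.id := by
  rw [intervalStep, dif_pos le_rfl]
  rfl

-- dsumMap lemmas
variable {ι : Type*} [DecidableEq ι]
  {M N P : ι → Type*} [∀ x, AddCommGroup (M x)] [∀ x, Module k (M x)]
  [∀ x, AddCommGroup (N x)] [∀ x, Module k (N x)]
  [∀ x, AddCommGroup (P x)] [∀ x, Module k (P x)]

lemma dsumMap_lof (f : ∀ x, M x →ₗ[k] N x) (x : ι) (m : M x) :
    dsumMap f (DirectSum.lof k ι M x m) = DirectSum.lof k ι N x (f x m) :=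
  DirectSum.toModule_lof k x m

lemma dsumMap_comp (f : ∀ x, M x →ₗ[k] N x) (g : ∀ x, N x →ₗ[k] P x) :
    (dsumMap g).comp (dsumMap f) = dsumMap (fun x => (g x).comp (f x)) := by
  refine DirectSum.linearMap_ext k fun x => ?_
  ext m
  simp [dsumMap_lof]

lemma dsumMap_id : dsumMap (fun x => (LinearMap.id : M x →ₗ[k] M x)) = LinearMap.id := by
  refine DirectSum.linearMap_ext k fun x => ?_
  ext m
  simp [dsumMap_lof]

lemma dsumMap_apply (f : ∀ x, M x →ₗ[k] N x) (v : ⨁ x, M x) (x : ι) :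
    dsumMap f v x = f x (v x) := by
  induction v using DirectSum.induction_on with
  | zero => simp
  | of y m =>
    rw [← DirectSum.lof_eq_of k, dsumMap_lof]
    by_cases hxy : y = x
    · subst hxy; simp [DirectSum.lof_eq_of]
    · rw [DirectSum.lof_eq_of, DirectSum.lof_eq_of, DirectSum.of_eq_of_ne _ _ _ (Ne.symm hxy),
        DirectSum.of_eq_of_ne _ _ _ (Ne.symm hxy), map_zero]
  | add v w hv hw => simp [hv, hw]

end Aux
section Pers

variable (k : Type) [Field k] (n : ℕ)
  (V : Fin (n + 1) → Type) [∀ i, AddCommGroup (V i)] [∀ i, Module k (V i)]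
  (φ : ∀ i : Fin n, V i.castSucc →ₗ[k] V i.succ)

/-- Composite structure map from index `i` to index `i + d`. -/
noncomputable def compPhi (i : ℕ) :
    ∀ d : ℕ, (h : i + d ≤ n) → (V ⟨i, by omega⟩ →ₗ[k] V ⟨i + d, by omega⟩)
  | 0, _ => LinearMap.id
  | (d+1), h => (φ ⟨i + d, by omega⟩).comp (compPhi i d (by omega))

variable {ι : Type} [Fintype ι] [DecidableEq ι] (ab : ι → ℕ × ℕ)

lemma compPhi_naturality
    (e : ∀ i : Fin (n + 1),
      V i ≃ₗ[k] ⨁ x : ι, intervalSubmodule k (ab x).1 (ab x).2 (i : ℕ))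
    (he : ∀ (i : Fin n) (v : V i.castSucc),
      e i.succ (φ i v) =
        dsumMap (fun x => intervalStep k (ab x).1 (ab x).2 (i : ℕ) ((i : ℕ) + 1))
          (e i.castSucc v))
    (i : ℕ) :
    ∀ (d : ℕ) (h : i + d ≤ n) (v : V ⟨i, by omega⟩),
      e ⟨i + d, by omega⟩ (compPhi k n V φ i d h v) =
        dsumMap (fun x => intervalStep k (ab x).1 (ab x).2 i (i + d)) (e ⟨i, by omega⟩ v)
  | 0, h, v => by
    have : (fun x => intervalStep k (ab x).1 (ab x).2 i (i + 0))
        = fun x => (LinearMap.id : intervalSubmodule k (ab x).1 (ab x).2 i →ₗ[k] _) :=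
      funext fun x => intervalStep_self _ _ _
    rw [this, dsumMap_id]
    rfl
  | (d+1), h, v => by
    have step := he ⟨i + d, by omega⟩ (compPhi k n V φ i d (by omega) v)
    have IH := compPhi_naturality e he i d (by omega) v
    have hcomp : (fun x => (intervalStep k (ab x).1 (ab x).2 (i + d) (i + d + 1)).comp
          (intervalStep k (ab x).1 (ab x).2 i (i + d)))
        = fun x => intervalStep k (ab x).1 (ab x).2 i (i + d + 1) :=
      funext fun x => intervalStep_comp _ _ _ _ _ (by omega) (by omega)
    calc e ⟨i + (d+1), by omega⟩ (compPhi k n V φ i (d+1) h v)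
        = dsumMap (fun x => intervalStep k (ab x).1 (ab x).2 (i + d) (i + d + 1))
            (e ⟨i + d, by omega⟩ (compPhi k n V φ i d (by omega) v)) := step
      _ = dsumMap (fun x => intervalStep k (ab x).1 (ab x).2 (i + d) (i + d + 1))
            (dsumMap (fun x => intervalStep k (ab x).1 (ab x).2 i (i + d))
              (e ⟨i, by omega⟩ v)) := by rw [IH]
      _ = dsumMap (fun x => intervalStep k (ab x).1 (ab x).2 i (i + d + 1))
            (e ⟨i, by omega⟩ v) := by
            rw [← hcomp, ← dsumMap_comp]; rfl

end Pers
section SubInj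

variable {k : Type*} [Field k] {ι : Type*} [DecidableEq ι]
  (P : ι → Prop) [DecidablePred P]
  (M : ι → Type*) [∀ x, AddCommGroup (M x)] [∀ x, Module k (M x)]

/-- Inclusion of the direct sum over a subtype into the full direct sum. -/
noncomputable def subInj : (⨁ y : {x // P x}, M y.1) →ₗ[k] ⨁ x, M x :=
  DirectSum.toModule k {x // P x} (⨁ x, M x) (fun y => DirectSum.lof k ι M y.1)

lemma subInj_lof (y : {x // P x}) (m : M y.1) :
    subInj (k := k) P M (DirectSum.lof k {x // P x} (fun y => M y.1) y m)
      = DirectSum.lof k ι M y.1 m := by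
  unfold subInj
  exact DirectSum.toModule_lof (R := k) (ι := {x // P x})
    (M := fun y : {x // P x} => M y.1) (N := ⨁ x, M x)
    (φ := fun y : {x // P x} => DirectSum.lof k ι M y.1) y m

lemma subInj_apply (w : ⨁ y : {x // P x}, M y.1) (x : ι) (hx : P x) :
    (subInj (k := k) P M w) x = w ⟨x, hx⟩ := by
  induction w using DirectSum.induction_on with
  | zero => simp
  | of y m =>
    rw [← DirectSum.lof_eq_of k, subInj_lof]
    by_cases hyx : y.1 = x
    · have hy : y = ⟨x, hx⟩ := Subtype.ext hyx
      subst hy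
      rw [DirectSum.lof_eq_of, DirectSum.lof_eq_of, DirectSum.of_eq_same,
        DirectSum.of_eq_same]
    · rw [DirectSum.lof_eq_of, DirectSum.lof_eq_of, DirectSum.of_eq_of_ne _ _ _ (Ne.symm hyx),
        DirectSum.of_eq_of_ne _ _ _ (fun hc => hyx (congrArg Subtype.val hc).symm)]
  | add v w hv hw => simp [map_add, hv, hw]

end SubInj

section Rank

variable (k : Type) [Field k] (n : ℕ)
  (V : Fin (n + 1) → Type) [∀ i, AddCommGroup (V i)] [∀ i, Module k (V i)]
  (φ : ∀ i : Fin n, V i.castSucc →ₗ[k] V i.succ)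
  {ι : Type} [Fintype ι] [DecidableEq ι] (ab : ι → ℕ × ℕ)

set_option maxHeartbeats 1000000 in
lemma rank_compPhi (hdec : IsIntervalDecomposition k n V φ ab) (i d : ℕ) (hd : i + d ≤ n) :
    Module.finrank k (LinearMap.range (compPhi k n V φ i d hd)) =
      (Finset.univ.filter fun x => (ab x).1 ≤ i ∧ i + d ≤ (ab x).2).card := by
  obtain ⟨hab1, hab2, e, he⟩ := hdec
  set g := dsumMap (fun x => intervalStep k (ab x).1 (ab x).2 i (i + d)) with hg
  have h1 : (e ⟨i + d, by omega⟩).toLinearMap.comp (compPhi k n V φ i d hd)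
      = g.comp (e ⟨i, by omega⟩).toLinearMap :=
    LinearMap.ext fun v => compPhi_naturality k n V φ ab e he i d hd v
  have h2 : Module.finrank k (LinearMap.range (compPhi k n V φ i d hd))
      = Module.finrank k (LinearMap.range g) := by
    rw [← LinearEquiv.finrank_map_eq (e ⟨i + d, by omega⟩)
        (LinearMap.range (compPhi k n V φ i d hd)), ← LinearMap.range_comp, h1,
      LinearMap.range_comp_of_range_eq_top _ (LinearEquiv.range _)]
  rw [h2]
  -- now compute the rank of g
  set P := fun x => (ab x).1 ≤ i ∧ i + d ≤ (ab x).2 with hP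
  set j := subInj (k := k) P (fun x => intervalSubmodule k (ab x).1 (ab x).2 i) with hj
  have hrange : LinearMap.range g = LinearMap.range (g.comp j) := by
    refine le_antisymm ?_ (LinearMap.range_comp_le_range _ _)
    rintro w ⟨v, rfl⟩
    induction v using DirectSum.induction_on with
    | zero => simp
    | of x m =>
      by_cases hx : P x
      · refine ⟨DirectSum.lof k {x // P x}
          (fun y => intervalSubmodule k (ab y.1).1 (ab y.1).2 i) ⟨x, hx⟩ m, ?_⟩
        rw [LinearMap.comp_apply, hj,
          subInj_lof P (fun x => ↥(intervalSubmodule k (ab x).1 (ab x).2 i)) ⟨x, hx⟩ m]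
        rfl
      · have hz : intervalStep k (ab x).1 (ab x).2 i (i + d) = 0 :=
          intervalStep_eq_zero (by omega) (by rw [hP] at hx; exact hx)
        have h0 : g ((DirectSum.of (fun x => ↥(intervalSubmodule k (ab x).1 (ab x).2 i)) x) m)
            = 0 := by
          rw [← DirectSum.lof_eq_of k, hg, dsumMap_lof, hz]
          simp
        rw [h0]
        exact Submodule.zero_mem _
    | add v w hv hw =>
      rw [map_add]
      exact Submodule.add_mem _ hv hw
  have hinj : Function.Injective (g.comp j) := by
    rw [← LinearMap.ker_eq_bot, LinearMap.ker_eq_bot']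
    intro w hw
    have hw' : g (j w) = 0 := hw
    refine DFinsupp.ext fun y => ?_
    have h0 : (g (j w)) y.1 = 0 := by rw [hw']; simp
    rw [hg, dsumMap_apply, hj,
      subInj_apply P (fun x => ↥(intervalSubmodule k (ab x).1 (ab x).2 i)) w y.1 y.2] at h0
    have hstep := intervalStep_injective (k := k) (a := (ab y.1).1) (b := (ab y.1).2)
      y.2.1 (Nat.le_add_right i d) y.2.2
    have hz : w ⟨y.1, y.2⟩ = 0 := hstep (by rw [h0, map_zero])
    simpa using hz
  rw [hrange, LinearMap.finrank_range_of_inj hinj, Module.finrank_directSum]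
  have hone : ∀ y : {x // P x},
      Module.finrank k (intervalSubmodule k (ab y.1).1 (ab y.1).2 i) = 1 := by
    intro y
    have ht : intervalSubmodule k (ab y.1).1 (ab y.1).2 i = ⊤ :=
      intervalSubmodule_eq_top y.2.1 (le_trans (Nat.le_add_right i d) y.2.2)
    rw [ht, finrank_top, Module.finrank_self]
  rw [Finset.sum_congr rfl (fun y _ => hone y), Finset.sum_const, smul_eq_mul, mul_one,
    Finset.card_univ, Fintype.card_subtype]

end Rank
lemma card_filter_split {ι : Type} [Fintype ι] [DecidableEq ι] (p q r : ι → Prop)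
    [DecidablePred p] [DecidablePred q] [DecidablePred r]
    (h : ∀ x, p x ↔ (q x ∨ r x)) (hd : ∀ x, ¬(q x ∧ r x)) :
    (Finset.univ.filter p).card
      = (Finset.univ.filter q).card + (Finset.univ.filter r).card := by
  rw [← Finset.card_union_of_disjoint]
  · congr 1
    ext x
    simp only [Finset.mem_filter, Finset.mem_union, Finset.mem_univ, true_and]
    exact h x
  · rw [Finset.disjoint_left]
    intro a ha hb
    simp only [Finset.mem_filter, Finset.mem_univ, true_and] at ha hb
    exact hd a ⟨ha, hb⟩

lemma multiset_eq_of_filter_card_eq {n : ℕ} {ι₁ ι₂ : Type} [Fintype ι₁] [DecidableEq ι₁] [Fintype ι₂] [DecidableEq ι₂]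
    (ab₁ : ι₁ → ℕ × ℕ) (ab₂ : ι₂ → ℕ × ℕ)
    (h1a : ∀ x, (ab₁ x).1 ≤ (ab₁ x).2) (h1b : ∀ x, (ab₁ x).2 ≤ n)
    (h2a : ∀ x, (ab₂ x).1 ≤ (ab₂ x).2) (h2b : ∀ x, (ab₂ x).2 ≤ n)
    (hN : ∀ i j, i ≤ j → j ≤ n →
      (Finset.univ.filter fun x => (ab₁ x).1 ≤ i ∧ j ≤ (ab₁ x).2).card =
      (Finset.univ.filter fun x => (ab₂ x).1 ≤ i ∧ j ≤ (ab₂ x).2).card) :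
    Multiset.map ab₁ Finset.univ.val = Multiset.map ab₂ Finset.univ.val := by
  have hN' : ∀ i j, i ≤ j →
      (Finset.univ.filter fun x => (ab₁ x).1 ≤ i ∧ j ≤ (ab₁ x).2).card =
      (Finset.univ.filter fun x => (ab₂ x).1 ≤ i ∧ j ≤ (ab₂ x).2).card := by
    intro i j hij
    by_cases hj : j ≤ n
    · exact hN i j hij hj
    · have e1 : (Finset.univ.filter fun x => (ab₁ x).1 ≤ i ∧ j ≤ (ab₁ x).2) = ∅ :=
        Finset.filter_false_of_mem (fun x _ => by have := h1b x; omega)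
      have e2 : (Finset.univ.filter fun x => (ab₂ x).1 ≤ i ∧ j ≤ (ab₂ x).2) = ∅ :=
        Finset.filter_false_of_mem (fun x _ => by have := h2b x; omega)
      rw [e1, e2]
      rfl
  have hG : ∀ i j, i ≤ j →
      (Finset.univ.filter fun x => (ab₁ x).1 ≤ i ∧ (ab₁ x).2 = j).card =
      (Finset.univ.filter fun x => (ab₂ x).1 ≤ i ∧ (ab₂ x).2 = j).card := by
    intro i j hij
    have s1 := card_filter_split (fun x => (ab₁ x).1 ≤ i ∧ j ≤ (ab₁ x).2)
      (fun x => (ab₁ x).1 ≤ i ∧ (ab₁ x).2 = j) (fun x => (ab₁ x).1 ≤ i ∧ j + 1 ≤ (ab₁ x).2)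
      (fun x => by omega) (fun x => by omega)
    have s2 := card_filter_split (fun x => (ab₂ x).1 ≤ i ∧ j ≤ (ab₂ x).2)
      (fun x => (ab₂ x).1 ≤ i ∧ (ab₂ x).2 = j) (fun x => (ab₂ x).1 ≤ i ∧ j + 1 ≤ (ab₂ x).2)
      (fun x => by omega) (fun x => by omega)
    have t1 := hN' i j hij
    have t2 := hN' i (j + 1) (by omega)
    omega
  have hC : ∀ a b : ℕ,
      (Finset.univ.filter fun x => (ab₁ x).1 = a ∧ (ab₁ x).2 = b).card =
      (Finset.univ.filter fun x => (ab₂ x).1 = a ∧ (ab₂ x).2 = b).card := by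
    intro a b
    by_cases hab : a ≤ b ∧ b ≤ n
    · match a with
      | 0 =>
        have e1 : (Finset.univ.filter fun x => (ab₁ x).1 = 0 ∧ (ab₁ x).2 = b)
            = (Finset.univ.filter fun x => (ab₁ x).1 ≤ 0 ∧ (ab₁ x).2 = b) :=
          Finset.filter_congr (fun x _ => by omega)
        have e2 : (Finset.univ.filter fun x => (ab₂ x).1 = 0 ∧ (ab₂ x).2 = b)
            = (Finset.univ.filter fun x => (ab₂ x).1 ≤ 0 ∧ (ab₂ x).2 = b) :=
          Finset.filter_congr (fun x _ => by omega)
        rw [e1, e2]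
        exact hG 0 b (by omega)
      | (a + 1) =>
        have s1 := card_filter_split (fun x => (ab₁ x).1 ≤ a + 1 ∧ (ab₁ x).2 = b)
          (fun x => (ab₁ x).1 ≤ a ∧ (ab₁ x).2 = b) (fun x => (ab₁ x).1 = a + 1 ∧ (ab₁ x).2 = b)
          (fun x => by omega) (fun x => by omega)
        have s2 := card_filter_split (fun x => (ab₂ x).1 ≤ a + 1 ∧ (ab₂ x).2 = b)
          (fun x => (ab₂ x).1 ≤ a ∧ (ab₂ x).2 = b) (fun x => (ab₂ x).1 = a + 1 ∧ (ab₂ x).2 = b)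
          (fun x => by omega) (fun x => by omega)
        have g1 := hG a b (by omega)
        have g2 := hG (a + 1) b (by omega)
        omega
    · have e1 : (Finset.univ.filter fun x => (ab₁ x).1 = a ∧ (ab₁ x).2 = b) = ∅ :=
        Finset.filter_false_of_mem (fun x _ => by have := h1a x; have := h1b x; omega)
      have e2 : (Finset.univ.filter fun x => (ab₂ x).1 = a ∧ (ab₂ x).2 = b) = ∅ :=
        Finset.filter_false_of_mem (fun x _ => by have := h2a x; have := h2b x; omega)
      rw [e1, e2]
      rfl
  refine Multiset.ext.mpr fun p => ?_
  rw [Multiset.count_map, Multiset.count_map]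
  have e1 : Multiset.filter (fun x => p = ab₁ x) Finset.univ.val
      = (Finset.univ.filter fun x => (ab₁ x).1 = p.1 ∧ (ab₁ x).2 = p.2).val := by
    rw [Finset.filter_val]
    refine Multiset.filter_congr fun x _ => ?_
    constructor
    · rintro rfl; exact ⟨rfl, rfl⟩
    · rintro ⟨ha, hb⟩; exact (Prod.ext ha hb).symm
  have e2 : Multiset.filter (fun x => p = ab₂ x) Finset.univ.val
      = (Finset.univ.filter fun x => (ab₂ x).1 = p.1 ∧ (ab₂ x).2 = p.2).val := by
    rw [Finset.filter_val]
    refine Multiset.filter_congr fun x _ => ?_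
    constructor
    · rintro rfl; exact ⟨rfl, rfl⟩
    · rintro ⟨ha, hb⟩; exact (Prod.ext ha hb).symm
  rw [e1, e2]
  exact hC p.1 p.2

/-- **Uniqueness of the interval decomposition.**  If a pointwise finite-dimensional
persistence module `(V, φ)` of length `n` decomposes into interval modules indexed by
`(ι₁, ab₁)` and also by `(ι₂, ab₂)`, then the corresponding multisets of intervals
coincide. -/
theorem persistence_module_interval_decomposition_unique
    (k : Type) [Field k] (n : ℕ)
    (V : Fin (n + 1) → Type) [∀ i, AddCommGroup (V i)] [∀ i, Module k (V i)]
    [∀ i, FiniteDimensional k (V i)]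
    (φ : ∀ i : Fin n, V i.castSucc →ₗ[k] V i.succ)
    {ι₁ ι₂ : Type} [Fintype ι₁] [DecidableEq ι₁] [Fintype ι₂] [DecidableEq ι₂]
    (ab₁ : ι₁ → ℕ × ℕ) (ab₂ : ι₂ → ℕ × ℕ)
    (h₁ : IsIntervalDecomposition k n V φ ab₁)
    (h₂ : IsIntervalDecomposition k n V φ ab₂) :
    Multiset.map ab₁ Finset.univ.val = Multiset.map ab₂ Finset.univ.val := by
  refine multiset_eq_of_filter_card_eq (n := n) ab₁ ab₂ h₁.1 h₁.2.1 h₂.1 h₂.2.1 ?_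
  intro i j hij hj
  have e1 := rank_compPhi k n V φ ab₁ h₁ i (j - i) (by omega)
  have e2 := rank_compPhi k n V φ ab₂ h₂ i (j - i) (by omega)
  have key := e1.symm.trans e2
  have hij' : i + (j - i) = j := by omega
  rw [hij'] at key
  exact key
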